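/- Under the instrumental-variable moment condition, the reformulated conditional moment restriction holds: E[Y − q0(X) − θ0(X)·(h0(Z,X) − p0(X)) | Z, X] = 0 almost surely. -/

import Mathlib

open MeasureTheory

private lemma integrable_of_bdd {Ω : Type*} [MeasurableSpace Ω] {μ : Measure Ω}
    [IsFiniteMeasure μ] {f : Ω → ℝ} (hf : Measurable f) {C : ℝ} (h : ∀ ω, |f ω| ≤ C) :
    Integrable f μ :=
  Integrable.mono' (integrable_const C) hf.aestronglyMeasurable
    (Filter.Eventually.of_forall fun ω => by simpa using h ω)

theorem stmt_1
    {Ω 𝓧 : Type*} [MeasurableSpace Ω] [MeasurableSpace 𝓧] [StandardBorelSpace 𝓧]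
    (μ : Measure Ω) [IsProbabilityMeasure μ]
    (Y T Z : Ω → ℝ) (X : Ω → 𝓧)
    (hY : Measurable Y) (hT : Measurable T) (hZ : Measurable Z) (hX : Measurable X)
    (hYbdd : ∃ C, ∀ ω, |Y ω| ≤ C) (hTbdd : ∃ C, ∀ ω, |T ω| ≤ C)
    (hZbdd : ∃ C, ∀ ω, |Z ω| ≤ C)
    (θ0 f0 : 𝓧 → ℝ) (hθ0m : Measurable θ0) (hf0m : Measurable f0)
    (hθ0bdd : ∃ C, ∀ x, |θ0 x| ≤ C) (hf0bdd : ∃ C, ∀ x, |f0 x| ≤ C)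
    (hIV : μ[fun ω => Y ω - θ0 (X ω) * T ω - f0 (X ω) |
        MeasurableSpace.comap (fun ω => (Z ω, X ω)) inferInstance] =ᵐ[μ] 0)
    (q0 p0 r0 : 𝓧 → ℝ) (hq0m : Measurable q0) (hp0m : Measurable p0) (hr0m : Measurable r0)
    (hq0bdd : ∃ C, ∀ x, |q0 x| ≤ C) (hp0bdd : ∃ C, ∀ x, |p0 x| ≤ C)
    (hr0bdd : ∃ C, ∀ x, |r0 x| ≤ C)
    (hq0 : (fun ω => q0 (X ω)) =ᵐ[μ] μ[Y | MeasurableSpace.comap X inferInstance])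
    (hp0 : (fun ω => p0 (X ω)) =ᵐ[μ] μ[T | MeasurableSpace.comap X inferInstance])
    (hr0 : (fun ω => r0 (X ω)) =ᵐ[μ] μ[Z | MeasurableSpace.comap X inferInstance])
    (h0 : ℝ × 𝓧 → ℝ) (hh0m : Measurable h0) (hh0bdd : ∃ C, ∀ zx, |h0 zx| ≤ C)
    (hh0 : (fun ω => h0 (Z ω, X ω)) =ᵐ[μ]
        μ[T | MeasurableSpace.comap (fun ω => (Z ω, X ω)) inferInstance])
    (β0 : 𝓧 → ℝ) (hβ0m : Measurable β0) (hβ0bdd : ∃ C, ∀ x, |β0 x| ≤ C)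
    (hβ0 : (fun ω => β0 (X ω)) =ᵐ[μ]
        μ[fun ω => (T ω - p0 (X ω)) * (Z ω - r0 (X ω)) | MeasurableSpace.comap X inferInstance])
    (V0 : 𝓧 → ℝ) (hV0m : Measurable V0) (hV0bdd : ∃ C, ∀ x, |V0 x| ≤ C)
    (hV0 : (fun ω => V0 (X ω)) =ᵐ[μ]
        μ[fun ω => (h0 (Z ω, X ω) - p0 (X ω)) ^ 2 | MeasurableSpace.comap X inferInstance]) :
    μ[fun ω => Y ω - q0 (X ω) - θ0 (X ω) * (h0 (Z ω, X ω) - p0 (X ω)) |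
        MeasurableSpace.comap (fun ω => (Z ω, X ω)) inferInstance] =ᵐ[μ] 0 := by
  obtain ⟨CY, hCY⟩ := hYbdd
  obtain ⟨CT, hCT⟩ := hTbdd
  obtain ⟨Cθ, hCθ⟩ := hθ0bdd
  obtain ⟨Cf, hCf⟩ := hf0bdd
  obtain ⟨Cq, hCq⟩ := hq0bdd
  obtain ⟨Cp, hCp⟩ := hp0bdd
  obtain ⟨Ch, hCh⟩ := hh0bdd
  have hZX : Measurable (fun ω => (Z ω, X ω)) := hZ.prodMk hX
  -- integrability facts (before any measurable-space hypotheses are introduced)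
  have hYI : Integrable Y μ := integrable_of_bdd hY hCY
  have hTI : Integrable T μ := integrable_of_bdd hT hCT
  have hfXI : Integrable (fun ω => f0 (X ω)) μ :=
    integrable_of_bdd (hf0m.comp hX) (fun ω => hCf (X ω))
  have hh0I : Integrable (fun ω => h0 (Z ω, X ω)) μ :=
    integrable_of_bdd (hh0m.comp hZX) (fun ω => hCh _)
  have hθTI : Integrable (fun ω => θ0 (X ω) * T ω) μ :=
    integrable_of_bdd ((hθ0m.comp hX).mul hT)
      (C := Cθ * CT) (fun ω => by
        rw [abs_mul]
        exact mul_le_mul (hCθ _) (hCT _) (abs_nonneg _) ((abs_nonneg _).trans (hCθ (X ω))))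
  have hgI : Integrable (fun ω => Y ω - θ0 (X ω) * T ω - f0 (X ω)) μ :=
    (hYI.sub hθTI).sub hfXI
  have hwI : Integrable (fun ω => T ω - h0 (Z ω, X ω)) μ := hTI.sub hh0I
  have hu2I : Integrable (fun ω => θ0 (X ω) * (T ω - h0 (Z ω, X ω))) μ :=
    integrable_of_bdd ((hθ0m.comp hX).mul (hT.sub (hh0m.comp hZX)))
      (C := Cθ * (CT + Ch)) (fun ω => by
        rw [abs_mul]
        refine mul_le_mul (hCθ _) ((abs_sub _ _).trans (add_le_add (hCT _) (hCh _)))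
          (abs_nonneg _) ((abs_nonneg _).trans (hCθ (X ω))))
  have hcI : Integrable (fun ω => θ0 (X ω) * p0 (X ω) + f0 (X ω) - q0 (X ω)) μ :=
    integrable_of_bdd ((((hθ0m.comp hX).mul (hp0m.comp hX)).add (hf0m.comp hX)).sub
      (hq0m.comp hX))
      (C := Cθ * Cp + Cf + Cq) (fun ω => by
        refine (abs_sub _ _).trans (add_le_add ((abs_add_le _ _).trans (add_le_add ?_ (hCf _)))
          (hCq _))
        rw [abs_mul]
        exact mul_le_mul (hCθ _) (hCp _) (abs_nonneg _) ((abs_nonneg _).trans (hCθ (X ω))))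
  -- measurable spaces
  have hm : MeasurableSpace.comap (fun ω => (Z ω, X ω)) inferInstance
      ≤ (inferInstance : MeasurableSpace Ω) := hZX.comap_le
  have hmX : MeasurableSpace.comap X inferInstance
      ≤ (inferInstance : MeasurableSpace Ω) := hX.comap_le
  set m : MeasurableSpace Ω := MeasurableSpace.comap (fun ω => (Z ω, X ω)) inferInstance
    with hm_def
  set mX : MeasurableSpace Ω := MeasurableSpace.comap X inferInstance with hmX_def
  have hZXm : Measurable[m] (fun ω => (Z ω, X ω)) := Measurable.of_comap_le le_rfl
  have hXmX : Measurable[mX] X := Measurable.of_comap_le le_rfl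
  have hXm : Measurable[m] X := (measurable_snd.comp hZXm : _)
  have hmXm : mX ≤ m := hXm.comap_le
  -- measurability facts
  have hθX_mX : StronglyMeasurable[mX] (fun ω => θ0 (X ω)) :=
    (hθ0m.comp hXmX).stronglyMeasurable
  have hθX_m : StronglyMeasurable[m] (fun ω => θ0 (X ω)) :=
    (hθ0m.comp hXm).stronglyMeasurable
  have hfX_mX : StronglyMeasurable[mX] (fun ω => f0 (X ω)) :=
    (hf0m.comp hXmX).stronglyMeasurable
  have hh0ZX_m : StronglyMeasurable[m] (fun ω => h0 (Z ω, X ω)) :=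
    (hh0m.comp hZXm).stronglyMeasurable
  have hc_m : StronglyMeasurable[m]
      (fun ω => θ0 (X ω) * p0 (X ω) + f0 (X ω) - q0 (X ω)) :=
    ((((hθ0m.comp hXm).mul (hp0m.comp hXm)).add (hf0m.comp hXm)).sub
      (hq0m.comp hXm)).stronglyMeasurable
  -- Step 1: q0 ∘ X =ᵐ θ0∘X * p0∘X + f0∘X
  have e1 : μ[fun ω => Y ω - θ0 (X ω) * T ω - f0 (X ω) | mX] =ᵐ[μ] 0 := by
    refine (condExp_condExp_of_le hmXm hm).symm.trans ?_
    calc μ[μ[fun ω => Y ω - θ0 (X ω) * T ω - f0 (X ω) | m] | mX]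
        =ᵐ[μ] μ[(0 : Ω → ℝ) | mX] := condExp_congr_ae hIV
      _ = 0 := condExp_zero
  have e2 : μ[fun ω => Y ω - θ0 (X ω) * T ω - f0 (X ω) | mX] =ᵐ[μ]
      μ[Y | mX] - ((fun ω => θ0 (X ω)) * μ[T | mX] + fun ω => f0 (X ω)) := by
    have hrw : (fun ω => Y ω - θ0 (X ω) * T ω - f0 (X ω)) =
        Y - ((fun ω => θ0 (X ω) * T ω) + fun ω => f0 (X ω)) := by
      funext ω; simp [sub_sub]
    rw [hrw]
    refine (condExp_sub hYI (hθTI.add hfXI) _).trans ?_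
    refine Filter.EventuallyEq.sub Filter.EventuallyEq.rfl ?_
    refine (condExp_add hθTI hfXI _).trans ?_
    refine Filter.EventuallyEq.add ?_ ?_
    · exact condExp_mul_of_stronglyMeasurable_left hθX_mX hθTI hTI
    · rw [condExp_of_stronglyMeasurable hmX hfX_mX hfXI]
  have key : (fun ω => θ0 (X ω) * p0 (X ω) + f0 (X ω) - q0 (X ω)) =ᵐ[μ] 0 := by
    filter_upwards [e1, e2, hq0, hp0] with ω h1 h2 h3 h4
    simp only [Pi.zero_apply, Pi.add_apply, Pi.sub_apply, Pi.mul_apply] at h1 h2 ⊢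
    rw [h1] at h2
    rw [← h3, ← h4] at h2
    linarith
  -- Step 2
  have hF : (fun ω => Y ω - q0 (X ω) - θ0 (X ω) * (h0 (Z ω, X ω) - p0 (X ω))) =
      ((fun ω => Y ω - θ0 (X ω) * T ω - f0 (X ω)) +
        fun ω => θ0 (X ω) * (T ω - h0 (Z ω, X ω))) +
        fun ω => θ0 (X ω) * p0 (X ω) + f0 (X ω) - q0 (X ω) := by
    funext ω; simp only [Pi.add_apply]; ring
  have eF : μ[fun ω => Y ω - q0 (X ω) - θ0 (X ω) * (h0 (Z ω, X ω) - p0 (X ω)) | m] =ᵐ[μ]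
      (μ[fun ω => Y ω - θ0 (X ω) * T ω - f0 (X ω) | m] +
        μ[fun ω => θ0 (X ω) * (T ω - h0 (Z ω, X ω)) | m]) +
        μ[fun ω => θ0 (X ω) * p0 (X ω) + f0 (X ω) - q0 (X ω) | m] := by
    rw [hF]
    exact (condExp_add (hgI.add hu2I) hcI _).trans
      (Filter.EventuallyEq.add (condExp_add hgI hu2I _) Filter.EventuallyEq.rfl)
  have e_mul : μ[fun ω => θ0 (X ω) * (T ω - h0 (Z ω, X ω)) | m] =ᵐ[μ]
      (fun ω => θ0 (X ω)) * μ[fun ω => T ω - h0 (Z ω, X ω) | m] :=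
    condExp_mul_of_stronglyMeasurable_left hθX_m hu2I hwI
  have e_w : μ[fun ω => T ω - h0 (Z ω, X ω) | m] =ᵐ[μ] 0 := by
    have h1 : μ[fun ω => T ω - h0 (Z ω, X ω) | m] =ᵐ[μ]
        μ[T | m] - μ[(fun ω => h0 (Z ω, X ω)) | m] := condExp_sub hTI hh0I _
    have h2 : μ[(fun ω => h0 (Z ω, X ω)) | m] = fun ω => h0 (Z ω, X ω) :=
      condExp_of_stronglyMeasurable hm hh0ZX_m hh0I
    filter_upwards [h1, hh0] with ω hw1 hw2
    rw [h2] at hw1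
    simp only [Pi.sub_apply] at hw1
    simp [hw1, ← hw2]
  have e_c : μ[fun ω => θ0 (X ω) * p0 (X ω) + f0 (X ω) - q0 (X ω) | m] =
      fun ω => θ0 (X ω) * p0 (X ω) + f0 (X ω) - q0 (X ω) :=
    condExp_of_stronglyMeasurable hm hc_m hcI
  filter_upwards [eF, hIV, e_mul, e_w, key] with ω h1 h2 h3 h4 h5
  simp only [Pi.add_apply, Pi.mul_apply, Pi.zero_apply, Pi.sub_apply] at h1 h2 h3 h4 h5 ⊢
  rw [e_c] at h1
  rw [h1, h2, h3, h4]
  simpa using h5
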